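/- Let (α_j)_{j≥1} be a strictly decreasing sequence of positive real numbers converging to 0, and in X = ℓ₂(ℕ) let K := {α_j e_j : j ≥ 1} ∪ {0}, where (e_j) is the canonical orthonormal basis. Then: (a) the manifold width satisfies δ_n(K)_{ℓ₂} = 0 for every n ≥ 1; (b) ε_n(K)_{ℓ₂} ≥ (1/2) α_{2^n} for every n ≥ 1. In particular, for any r > 0, choosing α_j := (1 + log₂ j)^{-r/2} yields a compact set K with δ_n(K)_{ℓ₂} = 0 ≤ n^{-r} for all n ≥ 1 while ε_n(K)_{ℓ₂} ≥ (1/2)(n+1)^{-r/2} for all n ≥ 1, so no Carl-type inequality can hold for the manifold widths. -/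

import Mathlib

open Metric

noncomputable def entropyNumber (X : Type*) [NormedAddCommGroup X] (K : Set X) (n : ℕ) : ℝ :=
  sInf { ε : ℝ | 0 < ε ∧ ∃ T : Finset X, T.card ≤ 2 ^ n ∧ K ⊆ ⋃ c ∈ T, closedBall c ε }

/-- The manifold width `δ_n(K)_X`: the infimum of `sup_{f ∈ K} ‖f - M (a f)‖` over all
maps `a : K → ℝⁿ` continuous on `K` and continuous maps `M : ℝⁿ → X`. -/
noncomputable def manifoldWidth (X : Type*) [NormedAddCommGroup X] (K : Set X) (n : ℕ) : ℝ :=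
  sInf { d | ∃ (a : X → Fin n → ℝ) (M : (Fin n → ℝ) → X),
    ContinuousOn a K ∧ Continuous M ∧ d = ⨆ f : K, ‖(f : X) - M (a (f : X))‖ }

/-- The space ℓ₂(ℕ) of square-summable real sequences. -/
noncomputable abbrev ellTwo : Type := lp (fun _ : ℕ => ℝ) 2

/-- The set K = {α_j e_j : j ≥ 1} ∪ {0} ⊂ ℓ₂(ℕ). -/
noncomputable def Kset (α : ℕ → ℝ) : Set ellTwo :=
  {x | ∃ j : ℕ, 1 ≤ j ∧ x = α j • lp.single 2 j (1 : ℝ)} ∪ {0}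

/-! ### auxiliary lemmas -/

section Aux

lemma norm_e (j : ℕ) : ‖(lp.single 2 j (1:ℝ) : ellTwo)‖ = 1 := by
  have := lp.norm_single (p := 2) (E := fun _ : ℕ => ℝ) (by norm_num) j (1:ℝ)
  simpa using this

lemma norm_smul_e (c : ℝ) (j : ℕ) : ‖(c • lp.single 2 j (1:ℝ) : ellTwo)‖ = |c| := by
  rw [norm_smul, norm_e]; simp

lemma apply_le_norm (x : ellTwo) (i : ℕ) : |x i| ≤ ‖x‖ := by
  simpa using lp.norm_apply_le_norm (by norm_num) x i

variable {α : ℕ → ℝ} (hpos : ∀ j : ℕ, 1 ≤ j → 0 < α j)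
  (hdec : ∀ j : ℕ, 1 ≤ j → α (j + 1) < α j)

include hdec in
lemma alpha_anti : ∀ i j : ℕ, 1 ≤ i → i ≤ j → α j ≤ α i := by
  intro i j hi hij
  induction j with
  | zero => omega
  | succ k ih =>
    rcases Nat.lt_or_ge i (k+1) with h | h
    · exact le_trans (hdec k (by omega)).le (ih (by omega))
    · have : i = k + 1 := by omega
      subst this; exact le_rfl

include hpos hdec in
lemma KsetSubBall : Kset α ⊆ closedBall (0 : ellTwo) (α 1) := by
  rintro x (⟨j, hj, rfl⟩ | hx)
  · rw [mem_closedBall, dist_zero_right, norm_smul_e, abs_of_pos (hpos j hj)]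
    exact alpha_anti hdec 1 j le_rfl hj
  · simp only [Set.mem_singleton_iff] at hx
    subst hx
    simp [(hpos 1 le_rfl).le]

/-- the point `g k` of the separated family -/
noncomputable def gpt (α : ℕ → ℝ) (k : ℕ) : ellTwo :=
  if k = 0 then 0 else α k • lp.single 2 k (1:ℝ)

lemma gpt_mem (k : ℕ) : gpt α k ∈ Kset α := by
  unfold gpt
  split
  · exact Or.inr rfl
  · exact Or.inl ⟨k, by omega, rfl⟩

lemma gpt_apply_ne (j i : ℕ) (hij : i ≠ j) : (gpt α j : ∀ _ : ℕ, ℝ) i = 0 := by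
  unfold gpt
  split
  · simp
  · rw [lp.coeFn_smul, Pi.smul_apply, lp.single_apply_ne 2 j _ hij]
    simp

include hpos hdec in
lemma gpt_dist {m i j : ℕ} (hij : i ≠ j) (hi : i ≤ m) (hj : j ≤ m) :
    α m ≤ dist (gpt α i) (gpt α j) := by
  have key : ∀ i j : ℕ, i ≠ j → i ≠ 0 → i ≤ m → α m ≤ dist (gpt α i) (gpt α j) := by
    intro i j hij hi0 hi
    have hcoord : ((gpt α i - gpt α j : ellTwo) : ∀ _ : ℕ, ℝ) i = α i := by
      rw [lp.coeFn_sub, Pi.sub_apply, gpt_apply_ne j i hij]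
      unfold gpt
      rw [if_neg hi0, lp.coeFn_smul, Pi.smul_apply, lp.single_apply_self]
      simp
    have h1 : |((gpt α i - gpt α j : ellTwo) : ∀ _ : ℕ, ℝ) i| ≤ ‖gpt α i - gpt α j‖ :=
      apply_le_norm _ i
    rw [hcoord, abs_of_pos (hpos i (by omega))] at h1
    rw [dist_eq_norm]
    exact le_trans (alpha_anti hdec i m (by omega) hi) h1
  rcases Nat.eq_zero_or_pos i with h0 | h0
  · have hj0 : j ≠ 0 := by omega
    rw [dist_comm]
    exact key j i (Ne.symm hij) hj0 hj
  · exact key i j hij (by omega) hi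

include hpos hdec in
lemma part_b (n : ℕ) :
    (1 / 2) * α (2 ^ n) ≤ entropyNumber ellTwo (Kset α) n := by
  apply le_csInf
  · exact ⟨α 1, hpos 1 le_rfl, {0}, by simpa using Nat.one_le_two_pow,
      by simpa using KsetSubBall hpos hdec⟩
  · rintro ε ⟨hε, T, hT, hcov⟩
    by_contra hcon
    push_neg at hcon
    have hmem : ∀ i : Fin (2 ^ n + 1), ∃ c, ∃ _ : c ∈ T, gpt α i ∈ closedBall c ε := by
      intro i
      exact Set.mem_iUnion₂.mp (hcov (gpt_mem i))
    choose c hc hball using hmem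
    have hcard : Fintype.card {x // x ∈ T} < Fintype.card (Fin (2 ^ n + 1)) := by
      simpa [Fintype.card_coe] using Nat.lt_succ_of_le hT
    obtain ⟨i, j, hij, heq⟩ :=
      Fintype.exists_ne_map_eq_of_card_lt
        (fun i : Fin (2 ^ n + 1) => (⟨c i, hc i⟩ : {x // x ∈ T})) hcard
    have hcc : c i = c j := congrArg Subtype.val heq
    have h1 : dist (gpt α i) (gpt α j) ≤ 2 * ε := by
      calc dist (gpt α i) (gpt α j) ≤ dist (gpt α i) (c i) + dist (c i) (gpt α j) :=
            dist_triangle _ _ _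
        _ ≤ ε + ε := by
            refine add_le_add (mem_closedBall.mp (hball i)) ?_
            rw [hcc, dist_comm]
            exact mem_closedBall.mp (hball j)
        _ = 2 * ε := by ring
    have h2 : α (2 ^ n) ≤ dist (gpt α i) (gpt α j) := by
      refine gpt_dist hpos hdec (fun h => hij (Fin.ext h)) (by omega) (by omega)
    linarith

/-! ### tent functions -/

/-- extended nodes: `β 0 = α 1 + 1`, `β j = α j` otherwise -/
noncomputable def nodes (α : ℕ → ℝ) (j : ℕ) : ℝ := if j = 0 then α 1 + 1 else α j

/-- tent function at node `j` -/
noncomputable def tent (α : ℕ → ℝ) (j : ℕ) (t : ℝ) : ℝ :=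
  max 0 (min ((t - nodes α (j+1)) / (nodes α j - nodes α (j+1)))
            ((nodes α (j-1) - t) / (nodes α (j-1) - nodes α j)))

lemma tent_continuous (j : ℕ) : Continuous (tent α j) := by
  unfold tent
  exact continuous_const.max
    (((continuous_id.sub continuous_const).div_const _).min
      ((continuous_const.sub continuous_id).div_const _))

include hpos hdec

lemma nodes_lt {j : ℕ} (hj : 1 ≤ j) : nodes α (j+1) < nodes α j := by
  unfold nodes
  rw [if_neg (by omega), if_neg (by omega)]
  exact hdec j hj

lemma nodes_lt' {j : ℕ} (hj : 1 ≤ j) : nodes α j < nodes α (j-1) := by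
  unfold nodes
  rcases Nat.eq_or_lt_of_le hj with h | h
  · rw [if_neg (by omega), if_pos (by omega)]
    have : α j = α 1 := by rw [← h]
    linarith
  · rw [if_neg (by omega), if_neg (by omega)]
    have := hdec (j-1) (by omega)
    have hj1 : j - 1 + 1 = j := by omega
    rw [hj1] at this
    exact this

lemma tent_self {j : ℕ} (hj : 1 ≤ j) : tent α j (α j) = 1 := by
  have h1 := nodes_lt hpos hdec hj
  have h2 := nodes_lt' hpos hdec hj
  have hαj : nodes α j = α j := by unfold nodes; rw [if_neg (by omega)]
  unfold tent
  rw [hαj, div_self (by linarith), div_self (by linarith)]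
  norm_num

lemma tent_eq_zero_of_le {j : ℕ} (hj : 1 ≤ j) {t : ℝ} (ht : t ≤ α (j+1)) :
    tent α j t = 0 := by
  have h1 := nodes_lt hpos hdec hj
  have hβ : nodes α (j+1) = α (j+1) := by unfold nodes; rw [if_neg (by omega)]
  unfold tent
  refine max_eq_left (le_trans (min_le_left _ _) ?_)
  apply div_nonpos_of_nonpos_of_nonneg
  · rw [hβ]; linarith
  · linarith

lemma tent_eq_zero_of_ge {j : ℕ} (hj : 2 ≤ j) {t : ℝ} (ht : α (j-1) ≤ t) :
    tent α j t = 0 := by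
  have h2 := nodes_lt' hpos hdec (by omega : 1 ≤ j)
  have hβ : nodes α (j-1) = α (j-1) := by unfold nodes; rw [if_neg (by omega)]
  unfold tent
  refine max_eq_left (le_trans (min_le_right _ _) ?_)
  apply div_nonpos_of_nonpos_of_nonneg
  · rw [hβ]; linarith
  · linarith

lemma tent_apply_ne {i j : ℕ} (hi : 1 ≤ i) (hj : 1 ≤ j) (hij : i ≠ j) :
    tent α j (α i) = 0 := by
  rcases Nat.lt_or_ge j i with h | h
  · exact tent_eq_zero_of_le hpos hdec hj
      (alpha_anti hdec (j+1) i (by omega) (by omega))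
  · have hj2 : 2 ≤ j := by omega
    exact tent_eq_zero_of_ge hpos hdec hj2
      (alpha_anti hdec i (j-1) hi (by omega))

/-! ### part (a) -/

include hpos hdec in
lemma part_a (hlim : Filter.Tendsto α Filter.atTop (nhds 0)) (n : ℕ) (hn : 1 ≤ n) :
    manifoldWidth ellTwo (Kset α) n = 0 := by
  unfold manifoldWidth
  set S := { d | ∃ (a : ellTwo → Fin n → ℝ) (M : (Fin n → ℝ) → ellTwo),
    ContinuousOn a (Kset α) ∧ Continuous M ∧
    d = ⨆ f : (Kset α), ‖(f : ellTwo) - M (a (f : ellTwo))‖ } with hS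
  have hlb : ∀ d ∈ S, 0 ≤ d := by
    rintro d ⟨a, M, _, _, rfl⟩
    exact Real.iSup_nonneg fun f => norm_nonneg _
  have hmem : ∀ N : ℕ, ∃ d ∈ S, d ≤ α (N+1) := by
    intro N
    have hi0 : 0 < n := hn
    set i0 : Fin n := ⟨0, hi0⟩ with hi0def
    refine ⟨_, ⟨fun x _ => ‖x‖,
      fun v => ∑ j ∈ Finset.Icc 1 N, tent α j (v i0) • (α j • lp.single 2 j (1:ℝ)),
      (continuous_pi fun _ => continuous_norm).continuousOn,
      continuous_finset_sum _ fun j _ =>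
        (((tent_continuous j).comp (continuous_apply i0)).smul continuous_const),
      rfl⟩, ?_⟩
    refine Real.iSup_le ?_ (hpos (N+1) (by omega)).le
    rintro ⟨x, hx | hx⟩
    · obtain ⟨i, hi, rfl⟩ := hx
      simp only
      rw [norm_smul_e, abs_of_pos (hpos i hi)]
      rcases le_or_gt i N with h | h
      · have hMv : (∑ j ∈ Finset.Icc 1 N,
            tent α j (α i) • (α j • lp.single 2 j (1:ℝ)) : ellTwo)
            = α i • lp.single 2 i (1:ℝ) := by
          rw [Finset.sum_eq_single_of_mem i (Finset.mem_Icc.mpr ⟨hi, h⟩)]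
          · rw [tent_self hpos hdec hi, one_smul]
          · intro j hjm hji
            rw [tent_apply_ne hpos hdec hi (Finset.mem_Icc.mp hjm).1 (Ne.symm hji), zero_smul]
        calc _ = ‖_ - (∑ j ∈ Finset.Icc 1 N,
            tent α j (α i) • (α j • lp.single 2 j (1:ℝ)) : ellTwo)‖ := rfl
          _ ≤ _ := by
            rw [hMv, sub_self, norm_zero]
            exact (hpos (N+1) (by omega)).le
      · have hMv : (∑ j ∈ Finset.Icc 1 N,
            tent α j (α i) • (α j • lp.single 2 j (1:ℝ)) : ellTwo) = 0 := by
          apply Finset.sum_eq_zero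
          intro j hjm
          rw [tent_eq_zero_of_le hpos hdec (Finset.mem_Icc.mp hjm).1
            (alpha_anti hdec (j+1) i (by omega)
              (by have := (Finset.mem_Icc.mp hjm).2; omega)), zero_smul]
        calc _ = ‖_ - (∑ j ∈ Finset.Icc 1 N,
            tent α j (α i) • (α j • lp.single 2 j (1:ℝ)) : ellTwo)‖ := rfl
          _ ≤ _ := by
            rw [hMv, sub_zero, norm_smul_e, abs_of_pos (hpos i hi)]
            exact alpha_anti hdec (N+1) i (by omega) (by omega)
    · simp only [Set.mem_singleton_iff] at hx; subst hx
      simp only [norm_zero]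
      have hMv : (∑ j ∈ Finset.Icc 1 N,
          tent α j (0:ℝ) • (α j • lp.single 2 j (1:ℝ)) : ellTwo) = 0 := by
        apply Finset.sum_eq_zero
        intro j hjm
        rw [tent_eq_zero_of_le hpos hdec (Finset.mem_Icc.mp hjm).1
          (hpos (j+1) (by omega)).le, zero_smul]
      calc _ = ‖(0:ellTwo) - (∑ j ∈ Finset.Icc 1 N,
            tent α j (0:ℝ) • (α j • lp.single 2 j (1:ℝ)) : ellTwo)‖ := rfl
        _ = 0 := by rw [hMv, sub_zero, norm_zero]
        _ ≤ _ := (hpos (N+1) (by omega)).le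
  have hbdd : BddBelow S := ⟨0, hlb⟩
  have hne : S.Nonempty := by obtain ⟨d, hd, _⟩ := hmem 0; exact ⟨d, hd⟩
  refine le_antisymm ?_ (le_csInf hne hlb)
  have h1 : ∀ N : ℕ, sInf S ≤ α (N+1) := by
    intro N
    obtain ⟨d, hd, hdle⟩ := hmem N
    exact le_trans (csInf_le hbdd hd) hdle
  exact ge_of_tendsto' (hlim.comp (Filter.tendsto_add_atTop_nat 1)) h1

end Aux

/-- For K = {α_j e_j : j ≥ 1} ∪ {0} with (α_j) strictly decreasing to 0,
the manifold widths of K all vanish while ε_n(K) ≥ α_{2^n}/2; in particular, with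
α_j = (1+log₂ j)^{-r/2}, one gets δ_n(K) = 0 ≤ n^{-r} and ε_n(K) ≥ (1/2)(n+1)^{-r/2},
so no Carl-type inequality holds for the manifold widths. -/
theorem stmt9 (α : ℕ → ℝ) (hpos : ∀ j : ℕ, 1 ≤ j → 0 < α j)
    (hdec : ∀ j : ℕ, 1 ≤ j → α (j + 1) < α j)
    (hlim : Filter.Tendsto α Filter.atTop (nhds 0)) :
    (∀ n : ℕ, 1 ≤ n → manifoldWidth ellTwo (Kset α) n = 0) ∧
    (∀ n : ℕ, 1 ≤ n → (1 / 2) * α (2 ^ n) ≤ entropyNumber ellTwo (Kset α) n) ∧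
    (∀ r : ℝ, 0 < r → ∀ n : ℕ, 1 ≤ n →
      manifoldWidth ellTwo (Kset (fun j => (1 + Real.logb 2 j) ^ (-r / 2))) n = 0 ∧
      manifoldWidth ellTwo (Kset (fun j => (1 + Real.logb 2 j) ^ (-r / 2))) n ≤ (n : ℝ) ^ (-r) ∧
      (1 / 2) * ((n : ℝ) + 1) ^ (-r / 2) ≤
        entropyNumber ellTwo (Kset (fun j => (1 + Real.logb 2 j) ^ (-r / 2))) n) := by
  refine ⟨fun n hn => part_a hpos hdec hlim n hn, fun n _ => part_b hpos hdec n, ?_⟩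
  intro r hr n hn
  set α' : ℕ → ℝ := fun j => (1 + Real.logb 2 j) ^ (-r / 2) with hα'
  have hbase : ∀ j : ℕ, 1 ≤ j → 0 < 1 + Real.logb 2 (j:ℝ) := by
    intro j hj
    have h0 : (0:ℝ) ≤ Real.logb 2 j :=
      Real.logb_nonneg (by norm_num) (by exact_mod_cast hj)
    linarith
  have hpos' : ∀ j : ℕ, 1 ≤ j → 0 < α' j := fun j hj => Real.rpow_pos_of_pos (hbase j hj) _
  have hdec' : ∀ j : ℕ, 1 ≤ j → α' (j+1) < α' j := by
    intro j hj
    have hj0 : (0:ℝ) < (j:ℝ) := by exact_mod_cast hj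
    have hlog : Real.logb 2 (j:ℝ) < Real.logb 2 ((j:ℝ)+1) :=
      Real.logb_lt_logb (by norm_num) hj0 (by linarith)
    simp only [hα']
    apply Real.rpow_lt_rpow_of_neg (hbase j hj)
    · push_cast
      linarith
    · linarith
  have hlim' : Filter.Tendsto α' Filter.atTop (nhds 0) := by
    have h1 : Filter.Tendsto (fun j : ℕ => 1 + Real.logb 2 (j:ℝ)) Filter.atTop Filter.atTop :=
      Filter.tendsto_atTop_add_const_left _ _
        ((Real.tendsto_logb_atTop (by norm_num)).comp tendsto_natCast_atTop_atTop)
    have h2 := (tendsto_rpow_neg_atTop (by positivity : 0 < r/2)).comp h1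
    have heq : α' = (fun x : ℝ => x ^ (-(r/2))) ∘ (fun j : ℕ => 1 + Real.logb 2 (j:ℝ)) := by
      funext j
      simp [hα', neg_div, Function.comp]
    rw [heq]
    exact h2
  refine ⟨part_a hpos' hdec' hlim' n hn, ?_, ?_⟩
  · rw [part_a hpos' hdec' hlim' n hn]
    exact Real.rpow_nonneg (Nat.cast_nonneg n) _
  · have hb := part_b hpos' hdec' n
    have hval : α' (2^n) = ((n:ℝ)+1) ^ (-r/2) := by
      have hlogval : Real.logb 2 (((2^n : ℕ)):ℝ) = (n:ℝ) := by
        push_cast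
        rw [Real.logb_pow, Real.logb_self_eq_one (by norm_num)]
        ring
      simp only [hα', hlogval]
      ring_nf
    rw [hval] at hb
    exact hb
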